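/- Let M : ℝ₊ → (0,∞) be non-decreasing and suppose there exist constants γ ∈ (0,1), δ ≥ γ/(1−γ), and s₁ > 1 such that M(s) ≤ s^γ and M(λs)/M(s) ≥ (log(λs)/log s)^{1+δ} for all λ ≥ 1 and s ≥ s₁. Then the function M_log(s) := M(s)/log(s/M(s)) is strictly increasing on [s₁,∞). -/

import Mathlib

/-- under a logarithmic positive-increase-type condition,
`M_log(s) = M(s)/log(s/M(s))` is strictly increasing on `[s₁,∞)`. -/
theorem stmt3 (M : ℝ → ℝ) (hMpos : ∀ s, 0 ≤ s → 0 < M s)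
    (hmono : MonotoneOn M (Set.Ici (0:ℝ)))
    (γ δ s₁ : ℝ) (hγ0 : 0 < γ) (hγ1 : γ < 1) (hδ : γ / (1 - γ) ≤ δ) (hs₁ : 1 < s₁)
    (hupper : ∀ s, s₁ ≤ s → M s ≤ s ^ γ)
    (hPI : ∀ lam : ℝ, 1 ≤ lam → ∀ s, s₁ ≤ s →
      (Real.log (lam * s) / Real.log s) ^ (1 + δ) ≤ M (lam * s) / M s) :
    StrictMonoOn (fun s => M s / Real.log (s / M s)) (Set.Ici s₁) := by
  intro s hs t ht hst
  simp only [Set.mem_Ici] at hs ht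
  have h1γ : 0 < 1 - γ := by linarith
  have hs1 : (1:ℝ) < s := hs₁.trans_le hs
  have hs0 : 0 < s := by linarith
  have ht1 : (1:ℝ) < t := hs1.trans hst
  have ht0 : 0 < t := by linarith
  have hMs : 0 < M s := hMpos s hs0.le
  have hMt : 0 < M t := hMpos t ht0.le
  set a := Real.log s with ha
  set b := Real.log t with hb
  set ms := Real.log (M s) with hmsd
  set mt := Real.log (M t) with hmtd
  have ha0 : 0 < a := Real.log_pos hs1
  have hb0 : 0 < b := Real.log_pos ht1
  have hab : a < b := Real.log_lt_log hs0 hst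
  have hms : ms ≤ γ * a := by
    calc ms ≤ Real.log (s ^ γ) := Real.log_le_log hMs (hupper s hs)
      _ = γ * a := Real.log_rpow hs0 γ
  have hmt : mt ≤ γ * b := by
    calc mt ≤ Real.log (t ^ γ) := Real.log_le_log hMt (hupper t (hs.trans hst.le))
      _ = γ * b := Real.log_rpow ht0 γ
  have hmm : ms ≤ mt :=
    Real.log_le_log hMs (hmono (Set.mem_Ici.mpr hs0.le) (Set.mem_Ici.mpr ht0.le) hst.le)
  have hds : Real.log (s / M s) = a - ms := Real.log_div hs0.ne' hMs.ne'
  have hdt : Real.log (t / M t) = b - mt := Real.log_div ht0.ne' hMt.ne'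
  have hdspos : 0 < a - ms := by nlinarith
  have hdtpos : 0 < b - mt := by nlinarith
  show M s / Real.log (s / M s) < M t / Real.log (t / M t)
  rw [hds, hdt, div_lt_div_iff₀ hdspos hdtpos]
  -- positive increase
  have hlam : 1 ≤ t / s := (one_le_div hs0).mpr hst.le
  have hPI' := hPI (t / s) hlam s hs
  rw [div_mul_cancel₀ t hs0.ne'] at hPI'
  set r := b / a with hr
  have hr1 : 1 < r := (one_lt_div ha0).mpr hab
  have hba : b = r * a := by rw [hr, div_mul_cancel₀ b ha0.ne']
  -- Bernoulli
  have hp1 : 1 < 1 / (1 - γ) := by rw [lt_div_iff₀ h1γ]; linarith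
  have hber := one_add_mul_self_lt_rpow_one_add (s := r - 1) (by linarith) (by linarith) hp1
  rw [show (1 : ℝ) + (r - 1) = r by ring] at hber
  -- exponent comparison
  have hexp : (1:ℝ) / (1 - γ) ≤ 1 + δ := by
    have : (1:ℝ) / (1 - γ) = 1 + γ / (1 - γ) := by field_simp; ring
    linarith
  have hrle : r ^ ((1:ℝ) / (1 - γ)) ≤ r ^ (1 + δ) :=
    Real.rpow_le_rpow_of_exponent_le hr1.le hexp
  -- key: b - ms < r^(1+δ) * (a - ms)
  have hkey : b - ms < r ^ (1 + δ) * (a - ms) := by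
    have h1 : (b - ms) * (1 - γ) ≤ (r - γ) * (a - ms) := by nlinarith
    have h2 : (r - γ) / (1 - γ) < r ^ ((1:ℝ) / (1 - γ)) := by
      have heq : (r - γ) / (1 - γ) = 1 + (1 / (1 - γ)) * (r - 1) := by field_simp; ring
      rw [heq]; exact hber
    have h3 : b - ms ≤ (r - γ) / (1 - γ) * (a - ms) := by
      rw [div_mul_eq_mul_div, le_div_iff₀ h1γ]; linarith
    have h4 : (r - γ) / (1 - γ) * (a - ms) < r ^ (1 + δ) * (a - ms) :=
      mul_lt_mul_of_pos_right (lt_of_lt_of_le h2 hrle) hdspos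
    linarith
  have hPI2 : M s * r ^ (1 + δ) ≤ M t := by
    rw [le_div_iff₀ hMs] at hPI'
    linarith [hPI']
  have e1 : M s * (b - mt) ≤ M s * (b - ms) :=
    mul_le_mul_of_nonneg_left (by linarith) hMs.le
  have e2 : M s * (b - ms) < M s * (r ^ (1 + δ) * (a - ms)) :=
    mul_lt_mul_of_pos_left hkey hMs
  have e3 : M s * (r ^ (1 + δ) * (a - ms)) ≤ M t * (a - ms) := by
    rw [← mul_assoc]
    exact mul_le_mul_of_nonneg_right hPI2 hdspos.le
  linarith
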